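/- Consider the Gumbel location family F_θ(x) := G(x − θ) with G(x) = exp(−e^{−x/s}) for a known scale s > 0 and location parameter θ ∈ ℝ. Fix λ ∈ (0,1) and θ_0 ∈ ℝ, and let h_{λ,θ_0}(θ) := F_{θ_0}(F_θ^{−1}(λ)) = G(θ + G^{−1}(λ) − θ_0). Then the second derivative at θ = θ_0 of the rate function I_{λ,θ_0}(θ) := H(λ|h_{λ,θ_0}(θ)) equals I_{λ,θ_0}″(θ_0) = (G′(G^{−1}(λ)))²/(λ(1−λ)) = λ·(log λ)²/(s²(1−λ)). Moreover, as a function of λ ∈ (0,1), I_{λ,θ_0}″(θ_0) is uniquely maximized at λ = λ̃_2, the unique root in (0,1/2) of log λ + 2 − 2λ = 0, and I_{λ̃_2,θ_0}″(θ_0) = 4λ̃_2(1−λ̃_2)/s². -/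

import Mathlib

open Set

/-- Relative entropy `H(p|q)` of the Bernoulli(`p`) law w.r.t. the Bernoulli(`q`) law. -/
noncomputable def relEntBer (p q : ℝ) : ℝ :=
  p * Real.log (p / q) + (1 - p) * Real.log ((1 - p) / (1 - q))


lemma curvature_formula (s θ₀ c l : ℝ) (hs : 0 < s) (hl : 0 < l) (hl1 : l < 1)
    (hc : Real.exp (-c / s) = -Real.log l) :
    deriv (deriv fun θ : ℝ => relEntBer l (Real.exp (-Real.exp (-(θ + c - θ₀) / s)))) θ₀
      = l * (Real.log l) ^ 2 / (s ^ 2 * (1 - l)) := by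
  set v : ℝ → ℝ := fun θ => Real.exp (-(θ + c - θ₀) / s) with hvdef
  set H : ℝ → ℝ := fun θ => Real.exp (-v θ) with hHdef
  have hsne : s ≠ 0 := ne_of_gt hs
  have hv : ∀ θ, HasDerivAt v (-(v θ) / s) θ := by
    intro θ
    have h1 : HasDerivAt (fun θ : ℝ => -(θ + c - θ₀) / s) (-1 / s) θ := by
      simpa using ((((hasDerivAt_id θ).add_const c).sub_const θ₀).neg.div_const s)
    have := h1.exp
    convert this using 1
    simp [hvdef]; ring
  have hH : ∀ θ, HasDerivAt H (H θ * (v θ / s)) θ := by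
    intro θ
    have := ((hv θ).neg).exp
    refine this.congr_deriv ?_
    show Real.exp (-v θ) * -(-v θ / s) = H θ * (v θ / s)
    rw [show H θ = Real.exp (-v θ) from rfl]; ring
  have hvpos : ∀ θ, 0 < v θ := fun θ => Real.exp_pos _
  have hH0 : ∀ θ, 0 < H θ := fun θ => Real.exp_pos _
  have hH1 : ∀ θ, H θ < 1 := by
    intro θ
    have : -v θ < 0 := by linarith [hvpos θ]
    simpa [hHdef] using Real.exp_lt_one_iff.mpr this
  set g : ℝ → ℝ := fun θ => (v θ / s) * ((1 - l) * H θ / (1 - H θ) - l) with hgdef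
  have hf : ∀ θ, HasDerivAt (fun θ => relEntBer l (H θ)) (g θ) θ := by
    intro θ
    have e1 : (fun θ => relEntBer l (H θ)) = fun θ =>
        l * (Real.log l - Real.log (H θ)) + (1 - l) * (Real.log (1 - l) - Real.log (1 - H θ)) := by
      funext x
      unfold relEntBer
      rw [Real.log_div (ne_of_gt hl) (ne_of_gt (hH0 x)),
        Real.log_div (by linarith) (by linarith [hH1 x])]
    rw [e1]
    have d1 : HasDerivAt (fun x => Real.log (H x)) ((H θ * (v θ / s)) / H θ) θ :=
      (hH θ).log (ne_of_gt (hH0 θ))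
    have d2 : HasDerivAt (fun x => 1 - H x) (-(H θ * (v θ / s))) θ := (hH θ).const_sub 1
    have d3 : HasDerivAt (fun x => Real.log (1 - H x)) ((-(H θ * (v θ / s))) / (1 - H θ)) θ :=
      d2.log (by linarith [hH1 θ])
    have d4 := (((hasDerivAt_const θ (Real.log l)).sub d1).const_mul l).add
      (((hasDerivAt_const θ (Real.log (1 - l))).sub d3).const_mul (1 - l))
    refine d4.congr_deriv ?_
    have h1 : H θ ≠ 0 := ne_of_gt (hH0 θ)
    have h2 : (1 : ℝ) - H θ ≠ 0 := by linarith [hH1 θ]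
    rw [show g θ = v θ / s * ((1 - l) * H θ / (1 - H θ) - l) from rfl]
    field_simp
    ring
  have hderiv1 : deriv (fun θ => relEntBer l (H θ)) = g := funext fun θ => (hf θ).deriv
  have hv0 : v θ₀ = -Real.log l := by
    have : -(θ₀ + c - θ₀) / s = -c / s := by ring
    rw [hvdef]; simp only [this]; exact hc
  have hH0v : H θ₀ = l := by
    rw [hHdef]; simp only [hv0, neg_neg]; exact Real.exp_log hl
  have hlne : l ≠ 0 := ne_of_gt hl
  have h1l : (1 : ℝ) - l ≠ 0 := by linarith
  have hW : HasDerivAt (fun θ => (1 - l) * H θ / (1 - H θ) - l)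
      ((1 - l) * (H θ₀ * (v θ₀ / s)) / (1 - H θ₀) ^ 2) θ₀ := by
    have dnum : HasDerivAt (fun θ => (1 - l) * H θ) ((1 - l) * (H θ₀ * (v θ₀ / s))) θ₀ :=
      (hH θ₀).const_mul (1 - l)
    have dden : HasDerivAt (fun θ => 1 - H θ) (-(H θ₀ * (v θ₀ / s))) θ₀ := (hH θ₀).const_sub 1
    have hdne : (1 : ℝ) - H θ₀ ≠ 0 := by linarith [hH1 θ₀]
    have := (dnum.div dden hdne).sub_const l
    refine this.congr_deriv ?_
    field_simp
    ring
  have hg : HasDerivAt g ((Real.log l) ^ 2 * l / (s ^ 2 * (1 - l))) θ₀ := by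
    have hvs : HasDerivAt (fun θ => v θ / s) ((-(v θ₀) / s) / s) θ₀ := (hv θ₀).div_const s
    have := hvs.mul hW
    refine this.congr_deriv ?_
    rw [hH0v, hv0]
    field_simp
    ring
  have : (fun θ : ℝ => relEntBer l (Real.exp (-Real.exp (-(θ + c - θ₀) / s))))
      = fun θ => relEntBer l (H θ) := rfl
  rw [this, hderiv1, hg.deriv]
  ring

noncomputable def psiAux (l : ℝ) : ℝ := Real.log l + 2 - 2 * l
noncomputable def phiAux (l : ℝ) : ℝ := l * (Real.log l) ^ 2 / (1 - l)

lemma psiAux_hasDerivAt {l : ℝ} (hl : 0 < l) : HasDerivAt psiAux (1 / l - 2) l := by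
  have h1 := (Real.hasDerivAt_log (ne_of_gt hl)).add_const 2
  have h2 := h1.sub ((hasDerivAt_id l).const_mul 2)
  refine h2.congr_deriv ?_
  rw [one_div]; ring

lemma psiAux_mono : StrictMonoOn psiAux (Ioc 0 (1/2 : ℝ)) := by
  apply strictMonoOn_of_deriv_pos (convex_Ioc _ _)
  · intro x hx
    exact (psiAux_hasDerivAt hx.1).continuousAt.continuousWithinAt
  · intro x hx
    rw [interior_Ioc] at hx
    rw [(psiAux_hasDerivAt hx.1).deriv]
    have : (2 : ℝ) < 1 / x := by
      rw [lt_div_iff₀ hx.1]; linarith [hx.2]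
    linarith

lemma psiAux_anti : StrictAntiOn psiAux (Icc (1/2 : ℝ) 1) := by
  apply strictAntiOn_of_deriv_neg (convex_Icc _ _)
  · intro x hx
    exact (psiAux_hasDerivAt (by linarith [hx.1])).continuousAt.continuousWithinAt
  · intro x hx
    rw [interior_Icc] at hx
    rw [(psiAux_hasDerivAt (by linarith [hx.1])).deriv]
    have : 1 / x < 2 := by
      rw [div_lt_iff₀ (by linarith [hx.1])]; linarith [hx.1]
    linarith

lemma psiAux_root : ∃ l₂ ∈ Ioo (Real.exp (-2)) (1/2 : ℝ), psiAux l₂ = 0 := by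
  have ha : psiAux (Real.exp (-2)) < 0 := by
    have : Real.log (Real.exp (-2)) = -2 := Real.log_exp _
    simp only [psiAux, this]
    have := Real.exp_pos (-2 : ℝ)
    linarith
  have hb : 0 < psiAux (1/2 : ℝ) := by
    have h2 : Real.log (1/2 : ℝ) = -Real.log 2 := by
      rw [one_div, Real.log_inv]
    simp only [psiAux, h2]
    have := Real.log_two_lt_d9
    norm_num
    linarith
  have hab : Real.exp (-2) < (1/2 : ℝ) := by
    have h1 : Real.exp (-2 : ℝ) < Real.exp (-1 : ℝ) := Real.exp_lt_exp.mpr (by norm_num)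
    have h2 : Real.exp (-1 : ℝ) < 1/2 := by
      rw [Real.exp_neg]
      have : (2 : ℝ) < Real.exp 1 := by
        have := Real.add_one_le_exp (1 : ℝ)
        nlinarith [Real.exp_pos (1:ℝ), Real.exp_one_gt_d9]
      have h3 : (Real.exp 1)⁻¹ < 2⁻¹ := by
        apply inv_strictAnti₀ <;> linarith
      rw [one_div]; linarith
    linarith
  have hcont : ContinuousOn psiAux (Icc (Real.exp (-2)) (1/2 : ℝ)) := by
    intro x hx
    have hx0 : 0 < x := lt_of_lt_of_le (Real.exp_pos _) hx.1
    exact (psiAux_hasDerivAt hx0).continuousAt.continuousWithinAt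
  have := intermediate_value_Ioo (le_of_lt hab) hcont
  have h0 : (0:ℝ) ∈ Ioo (psiAux (Real.exp (-2))) (psiAux (1/2)) := ⟨ha, hb⟩
  obtain ⟨l₂, hl₂, hval⟩ := this h0
  exact ⟨l₂, hl₂, hval⟩

lemma phiAux_hasDerivAt {l : ℝ} (hl : 0 < l) (hl1 : l < 1) :
    HasDerivAt phiAux (Real.log l * psiAux l / (1 - l) ^ 2) l := by
  have hlne : l ≠ 0 := ne_of_gt hl
  have h1l : (1 : ℝ) - l ≠ 0 := by linarith
  have dnum : HasDerivAt (fun x : ℝ => x * (Real.log x) ^ 2)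
      (1 * (Real.log l) ^ 2 + l * (2 * (Real.log l) ^ 1 * (1 / l))) l := by
    have hlog : HasDerivAt (fun x : ℝ => (Real.log x) ^ 2) (2 * (Real.log l) ^ 1 * (1 / l)) l := by
      have := (Real.hasDerivAt_log hlne).pow 2
      refine this.congr_deriv ?_
      rw [one_div]; ring
    exact (hasDerivAt_id l).mul hlog
  have dden : HasDerivAt (fun x : ℝ => 1 - x) (-1 : ℝ) l := by
    simpa using (hasDerivAt_id l).const_sub 1
  have := dnum.div dden h1l
  refine this.congr_deriv ?_
  unfold psiAux
  field_simp
  ring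

lemma phiAux_strictMonoOn {l₂ : ℝ} (h0 : 0 < l₂) (h2 : l₂ < 1/2)
    (hsign : ∀ l ∈ Ioo (0:ℝ) l₂, psiAux l < 0) :
    StrictMonoOn phiAux (Ioc 0 l₂) := by
  apply strictMonoOn_of_deriv_pos (convex_Ioc _ _)
  · intro x hx
    exact (phiAux_hasDerivAt hx.1 (by linarith [hx.2])).continuousAt.continuousWithinAt
  · intro x hx
    rw [interior_Ioc] at hx
    have hx1 : x < 1 := by linarith [hx.2]
    rw [(phiAux_hasDerivAt hx.1 hx1).deriv]
    have hlog : Real.log x < 0 := Real.log_neg hx.1 hx1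
    have hpsi : psiAux x < 0 := hsign x hx
    have hsq : (0:ℝ) < (1 - x) ^ 2 := pow_pos (by linarith) 2
    have : 0 < Real.log x * psiAux x := mul_pos_of_neg_of_neg hlog hpsi
    exact div_pos this hsq

lemma phiAux_strictAntiOn {l₂ : ℝ} (h0 : 0 < l₂) (h2 : l₂ < 1/2)
    (hsign : ∀ l ∈ Ioo l₂ (1:ℝ), 0 < psiAux l) :
    StrictAntiOn phiAux (Ico l₂ 1) := by
  apply strictAntiOn_of_deriv_neg (convex_Ico _ _)
  · intro x hx
    exact (phiAux_hasDerivAt (by linarith [hx.1]) hx.2).continuousAt.continuousWithinAt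
  · intro x hx
    rw [interior_Ico] at hx
    have hx0 : 0 < x := by linarith [hx.1]
    rw [(phiAux_hasDerivAt hx0 hx.2).deriv]
    have hlog : Real.log x < 0 := Real.log_neg hx0 hx.2
    have hpsi : 0 < psiAux x := hsign x hx
    have hsq : (0:ℝ) < (1 - x) ^ 2 := pow_pos (by linarith [hx.2]) 2
    have hneg : Real.log x * psiAux x < 0 := mul_neg_of_neg_of_pos hlog hpsi
    exact div_neg_of_neg_of_pos hneg hsq

lemma phiAux_max : ∃ l₂ : ℝ, l₂ ∈ Ioo (0:ℝ) (1/2) ∧ psiAux l₂ = 0 ∧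
    (∀ l ∈ Ioo (0:ℝ) (1/2), psiAux l = 0 → l = l₂) ∧
    (∀ l ∈ Ioo (0:ℝ) 1, l ≠ l₂ → phiAux l < phiAux l₂) := by
  obtain ⟨l₂, hmem, hroot⟩ := psiAux_root
  have h0 : 0 < l₂ := lt_trans (Real.exp_pos _) hmem.1
  have h2 : l₂ < 1/2 := hmem.2
  refine ⟨l₂, ⟨h0, h2⟩, hroot, ?_, ?_⟩
  · intro l hl hl0
    exact psiAux_mono.injOn ⟨hl.1, le_of_lt hl.2⟩ ⟨h0, le_of_lt h2⟩ (by rw [hl0, hroot])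
  · have hneg : ∀ l ∈ Ioo (0:ℝ) l₂, psiAux l < 0 := by
      intro l hl
      have := psiAux_mono ⟨hl.1, by linarith [hl.2]⟩ ⟨h0, le_of_lt h2⟩ hl.2
      linarith [hroot ▸ this]
    have hpos : ∀ l ∈ Ioo l₂ (1:ℝ), 0 < psiAux l := by
      intro l hl
      rcases le_or_gt l (1/2) with hle | hgt
      · have := psiAux_mono ⟨h0, le_of_lt h2⟩ ⟨lt_trans h0 hl.1, hle⟩ hl.1
        linarith [hroot ▸ this]
      · have h1 : psiAux 1 = 0 := by simp [psiAux]
        have := psiAux_anti ⟨le_of_lt hgt, le_of_lt hl.2⟩ ⟨by norm_num, le_refl 1⟩ hl.2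
        linarith [h1 ▸ this]
    intro l hl hne
    rcases lt_or_gt_of_ne hne with hlt | hgt
    · exact phiAux_strictMonoOn h0 h2 hneg ⟨hl.1, le_of_lt hlt⟩ ⟨h0, le_refl _⟩ hlt
    · exact phiAux_strictAntiOn h0 h2 hpos ⟨le_refl _, by linarith [hl.2, h2]⟩ ⟨le_of_lt hgt, hl.2⟩ hgt

/-- Gumbel location family `F_θ(x) = exp(−e^{−(x−θ)/s})`: curvature of the
method-of-quantiles rate function at `θ₀` and its unique maximizer `λ̃₂` in `λ`. -/
theorem stmt_14 (s θ₀ : ℝ) (hs : 0 < s)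
    (lam : ℝ) (hlam : lam ∈ Set.Ioo (0 : ℝ) 1)
    (G : ℝ → ℝ) (hG : ∀ x, G x = Real.exp (-Real.exp (-x / s)))
    (Ginv : ℝ → ℝ) (hGinv : ∀ l, Ginv l = -s * Real.log (-Real.log l))
    (F : ℝ → ℝ → ℝ) (hF : ∀ θ x, F θ x = G (x - θ))
    -- `h l θ = F_{θ₀}(F_θ^{-1}(l)) = G(θ + G^{-1}(l) − θ₀)`
    (h : ℝ → ℝ → ℝ) (hh : ∀ l θ, h l θ = G (θ + Ginv l - θ₀))
    -- `curv l = I_{l,θ₀}''(θ₀)` where `I_{l,θ₀}(θ) = H(l | h_{l,θ₀}(θ))`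
    (curv : ℝ → ℝ)
    (hcurv : ∀ l, curv l = deriv (deriv fun θ => relEntBer l (h l θ)) θ₀) :
    curv lam = (deriv G (Ginv lam)) ^ 2 / (lam * (1 - lam)) ∧
    curv lam = lam * (Real.log lam) ^ 2 / (s ^ 2 * (1 - lam)) ∧
    ∃ l₂ : ℝ, l₂ ∈ Set.Ioo (0 : ℝ) (1 / 2) ∧ Real.log l₂ + 2 - 2 * l₂ = 0 ∧
      (∀ l ∈ Set.Ioo (0 : ℝ) (1 / 2), Real.log l + 2 - 2 * l = 0 → l = l₂) ∧
      (∀ l ∈ Set.Ioo (0 : ℝ) 1, l ≠ l₂ → curv l < curv l₂) ∧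
      curv l₂ = 4 * l₂ * (1 - l₂) / s ^ 2 := by
  have hsne : s ≠ 0 := ne_of_gt hs
  -- the key exponential identity
  have hexpinv : ∀ l : ℝ, 0 < l → l < 1 → Real.exp (-(Ginv l) / s) = -Real.log l := by
    intro l hl hl1
    have hlog : Real.log l < 0 := Real.log_neg hl hl1
    rw [hGinv l]
    have : -(-s * Real.log (-Real.log l)) / s = Real.log (-Real.log l) := by
      field_simp
    rw [this, Real.exp_log (by linarith)]
  -- the curvature formula for all l ∈ (0,1)
  have key : ∀ l ∈ Set.Ioo (0 : ℝ) 1,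
      curv l = l * (Real.log l) ^ 2 / (s ^ 2 * (1 - l)) := by
    intro l hl
    rw [hcurv l]
    have hfun : (fun θ => relEntBer l (h l θ))
        = fun θ : ℝ => relEntBer l (Real.exp (-Real.exp (-(θ + Ginv l - θ₀) / s))) := by
      funext θ
      rw [hh, hG]
    rw [hfun]
    exact curvature_formula s θ₀ (Ginv l) l hs hl.1 hl.2 (hexpinv l hl.1 hl.2)
  have hkeylam := key lam hlam
  have hlam0 : (0:ℝ) < lam := hlam.1
  have hlam1 : lam < 1 := hlam.2
  have hlamne : lam ≠ 0 := ne_of_gt hlam0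
  have h1lam : (1:ℝ) - lam ≠ 0 := by linarith
  refine ⟨?_, hkeylam, ?_⟩
  · -- first conjunct: express via deriv G (Ginv lam)
    have hGfun : G = fun x => Real.exp (-Real.exp (-x / s)) := funext hG
    have hdG : HasDerivAt G (lam * (-Real.log lam) / s) (Ginv lam) := by
      rw [hGfun]
      set x₀ := Ginv lam
      have h1 : HasDerivAt (fun x : ℝ => -x / s) (-1 / s) x₀ := by
        simpa using (hasDerivAt_id x₀).neg.div_const s
      have h2 := h1.exp
      have h3 := h2.neg.exp
      have hx0 : Real.exp (-x₀ / s) = -Real.log lam := hexpinv lam hlam0 hlam1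
      have hx1 : Real.exp (-Real.exp (-x₀ / s)) = lam := by
        rw [hx0, neg_neg, Real.exp_log hlam0]
      refine h3.congr_deriv ?_
      simp only [Pi.neg_apply]
      rw [hx1, hx0]
      ring
    rw [hdG.deriv, hkeylam]
    field_simp
  · -- the maximization part
    obtain ⟨l₂, hl₂mem, hroot, huniq, hmax⟩ := phiAux_max
    have hl₂0 : 0 < l₂ := hl₂mem.1
    have hl₂half : l₂ < 1/2 := hl₂mem.2
    have hl₂1 : l₂ < 1 := by linarith
    have h1l₂ : (1:ℝ) - l₂ ≠ 0 := by linarith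
    have hcurv_phi : ∀ l ∈ Set.Ioo (0:ℝ) 1, curv l = phiAux l / s ^ 2 := by
      intro l hl
      rw [key l hl]
      unfold phiAux
      have h1 : (1:ℝ) - l ≠ 0 := by have := hl.2; simp only [Set.mem_Ioo] at hl; linarith [hl.2]
      have hsne : s ≠ 0 := ne_of_gt hs
      rw [div_div, mul_comm (1 - l) (s ^ 2)]
    refine ⟨l₂, hl₂mem, hroot, huniq, ?_, ?_⟩
    · intro l hl hne
      rw [hcurv_phi l hl, hcurv_phi l₂ ⟨hl₂0, hl₂1⟩]
      have hφ := hmax l hl hne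
      have hs2 : (0:ℝ) < s ^ 2 := pow_pos hs 2
      gcongr
    · have hlog₂ : Real.log l₂ = 2 * l₂ - 2 := by
        have := hroot
        unfold psiAux at this
        linarith
      rw [key l₂ ⟨hl₂0, hl₂1⟩, hlog₂]
      field_simp
      ring
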